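/- Let H > 0, m ≥ 2, φ = π/(4(m−1)), a_i = H(tan(iφ) − tan((i−1)φ)) for i = 1, …, m−1, and let φ'_{m−1} be the angle defined by tan φ'_{m−1} = H·a₁ / (H² + (a₁+⋯+a_{m−1})(a₂+⋯+a_{m−1})). Then φ'_{m−1} ≥ φ/2. -/

import Mathlib

open Real Finset

/-- Key quantitative lemma for the 2-layered drawing of `K_{m,n}`: with `H > 0`, `m ≥ 2`,
`φ = π/(4(m-1))`, `a i = H (tan (i φ) - tan ((i-1) φ))`, and `φ'` the angle in `(0, π/2)`
with `tan φ' = H a₁ / (H² + (a₁ + ⋯ + a_{m-1})(a₂ + ⋯ + a_{m-1}))`, we have `φ' ≥ φ/2`. -/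
theorem phi_last_ge_half (m : ℕ) (hm : 2 ≤ m) (H : ℝ) (hH : 0 < H)
    (φ : ℝ) (hφ : φ = π / (4 * ((m : ℝ) - 1)))
    (a : ℕ → ℝ)
    (ha : ∀ i : ℕ, 1 ≤ i → a i = H * (Real.tan (i * φ) - Real.tan (((i : ℝ) - 1) * φ)))
    (φ' : ℝ) (hrange : φ' ∈ Set.Ioo 0 (π / 2))
    (htan : Real.tan φ' = H * a 1 /
      (H ^ 2 + (∑ i ∈ Finset.Icc 1 (m - 1), a i) * (∑ i ∈ Finset.Icc 2 (m - 1), a i))) :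
    φ / 2 ≤ φ' := by

  have hm1 : (1:ℝ) ≤ (m:ℝ) - 1 := by
    have : (2:ℝ) ≤ m := by exact_mod_cast hm
    linarith
  have hφpos : 0 < φ := by
    rw [hφ]; positivity
  have hφle : φ ≤ π/4 := by
    rw [hφ]
    rw [div_le_div_iff₀ (by linarith) (by norm_num)]
    have := pi_pos
    nlinarith
  -- telescoping sums
  have hsum : ∀ n : ℕ, ∑ i ∈ Finset.Icc 1 n, a i = H * Real.tan (n * φ) := by
    intro n
    induction n with
    | zero => simp
    | succ n ih =>
      rw [Finset.sum_Icc_succ_top (Nat.one_le_iff_ne_zero.mpr (Nat.succ_ne_zero n)), ih,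
        ha (n+1) (Nat.le_add_left 1 n)]
      push_cast
      ring_nf
  have hcast : ((m - 1 : ℕ) : ℝ) = (m:ℝ) - 1 := by
    have : 1 ≤ m := le_trans one_le_two hm
    push_cast [this]; ring
  have hS1 : ∑ i ∈ Finset.Icc 1 (m-1), a i = H := by
    rw [hsum, hcast, hφ]
    have h0 : (m:ℝ) - 1 ≠ 0 := by linarith
    rw [show ((m:ℝ)-1) * (π / (4 * ((m:ℝ)-1))) = π/4 by field_simp]
    rw [tan_pi_div_four, mul_one]
  have ha1 : a 1 = H * Real.tan φ := by
    rw [ha 1 le_rfl]; norm_num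
  have hS2 : ∑ i ∈ Finset.Icc 2 (m-1), a i = H - a 1 := by
    have h1 : 1 ≤ m - 1 := by omega
    have : ∑ i ∈ Finset.Icc 1 (m-1), a i = a 1 + ∑ i ∈ Finset.Icc 2 (m-1), a i := by
      rw [Finset.Icc_eq_cons_Ioc h1, Finset.sum_cons, ← Finset.Icc_add_one_left_eq_Ioc]; rfl
    linarith [hS1]
  -- compute tan φ'
  have htanφpos : 0 < Real.tan φ := Real.tan_pos_of_pos_of_lt_pi_div_two hφpos (by linarith [pi_pos])
  have htanφle : Real.tan φ ≤ 1 := by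
    have := pi_pos
    calc Real.tan φ ≤ Real.tan (π/4) := by
          rcases eq_or_lt_of_le hφle with h | h
          · rw [h]
          · exact (Real.strictMonoOn_tan (by constructor <;> linarith)
              (by constructor <;> linarith) h).le
    _ = 1 := Real.tan_pi_div_four
  have htan' : Real.tan φ' = Real.tan φ / (2 - Real.tan φ) := by
    have hden : (0:ℝ) < H ^ 2 + H * (H - H * Real.tan φ) := by nlinarith
    rw [htan, hS1, hS2, ha1, div_eq_div_iff (ne_of_gt hden) (by intro h; nlinarith)]
    ring
  -- tan (φ/2) = sin φ / (1 + cos φ)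
  have hc : 0 < Real.cos (φ/2) := Real.cos_pos_of_mem_Ioo
    ⟨by linarith [pi_pos], by linarith [pi_pos]⟩
  have hcosφ : 0 < Real.cos φ := Real.cos_pos_of_mem_Ioo
    ⟨by linarith [pi_pos], by linarith [pi_pos]⟩
  have hsinφ : 0 < Real.sin φ := Real.sin_pos_of_pos_of_lt_pi hφpos (by linarith [pi_pos])
  have hs2 : Real.sin φ = 2 * Real.sin (φ/2) * Real.cos (φ/2) := by
    rw [← Real.sin_two_mul]; ring_nf
  have hc2 : Real.cos φ = 2 * Real.cos (φ/2) ^ 2 - 1 := by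
    rw [← Real.cos_two_mul]; ring_nf
  have hhalf : Real.tan (φ/2) = Real.sin φ / (1 + Real.cos φ) := by
    rw [Real.tan_eq_sin_div_cos, hs2, hc2, div_eq_div_iff (ne_of_gt hc) (by nlinarith)]
    ring
  -- main inequality: tan (φ/2) ≤ tan φ'
  have hfrac : Real.tan φ = Real.sin φ / Real.cos φ := Real.tan_eq_sin_div_cos φ
  have hsc : Real.sin φ ≤ Real.cos φ := by
    rw [hfrac] at htanφle; exact (div_le_one hcosφ).mp htanφle
  have h2c : 0 < 2 * Real.cos φ - Real.sin φ := by linarith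
  have hA : Real.tan φ / (2 - Real.tan φ) = Real.sin φ / (2 * Real.cos φ - Real.sin φ) := by
    rw [hfrac, div_eq_div_iff (by intro h; nlinarith [htanφle, hfrac]) (ne_of_gt h2c)]
    field_simp
  have key : Real.tan (φ/2) ≤ Real.tan φ' := by
    rw [htan', hhalf, hA]
    gcongr
    nlinarith [Real.cos_le_one φ]
  -- conclude via monotonicity
  have h1 : φ/2 ∈ Set.Ioo (-(π/2)) (π/2) := ⟨by linarith [pi_pos], by linarith [pi_pos]⟩
  have h2 : φ' ∈ Set.Ioo (-(π/2)) (π/2) := ⟨by linarith [hrange.1, pi_pos], hrange.2⟩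
  exact ((Real.strictMonoOn_tan.le_iff_le h1 h2).mp key)
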